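/- For a real number q > 1, the greedy q-expansion has only finitely many nonzero terms if and only if the quasi-greedy q-expansion is periodic (i.e., there exists k ≥ 1 with α_{i+k} = α_i for all i ≥ 1). -/
import Mathlib


/-- `c` is a `q`-expansion: a sequence of nonnegative integers with `c i ≤ q`
(we index from 0, so `c i` stands for the digit `c_{i+1}` of the paper)
such that `∑_{i≥1} c_i q^{-i} = 1`. -/
def IsExpansion (q : ℝ) (c : ℕ → ℕ) : Prop :=
  (∀ i, (c i : ℝ) ≤ q) ∧ ∑' i : ℕ, (c i : ℝ) / q ^ (i + 1) = 1

/-- The set `𝒰` of univoque numbers: real numbers `q ≥ 1` admitting exactly one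
`q`-expansion. -/
def UnivoqueSet : Set ℝ := {q | 1 ≤ q ∧ ∃! c : ℕ → ℕ, IsExpansion q c}

/-- `γ` is the greedy `q`-expansion: for every `n`, `γ n` is the largest
nonnegative integer `k` such that `(∑_{i<n} γ i / q^(i+1)) + k / q^(n+1) ≤ 1`. -/
def IsGreedy (q : ℝ) (γ : ℕ → ℕ) : Prop :=
  ∀ n : ℕ, IsGreatest
    {k : ℕ | (∑ i ∈ Finset.range n, (γ i : ℝ) / q ^ (i + 1)) + (k : ℝ) / q ^ (n + 1) ≤ 1} (γ n)

/-- `α` is the quasi-greedy `q`-expansion: for every `n`, `α n` is the largest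
nonnegative integer `k` such that `(∑_{i<n} α i / q^(i+1)) + k / q^(n+1) < 1`. -/
def IsQuasiGreedy (q : ℝ) (α : ℕ → ℕ) : Prop :=
  ∀ n : ℕ, IsGreatest
    {k : ℕ | (∑ i ∈ Finset.range n, (α i : ℝ) / q ^ (i + 1)) + (k : ℝ) / q ^ (n + 1) < 1} (α n)

/-- Strict lexicographic order on sequences of nonnegative integers. -/
def LexLT (a b : ℕ → ℕ) : Prop := ∃ n : ℕ, (∀ i < n, a i = b i) ∧ a n < b n

/-- Lexicographic order on sequences of nonnegative integers. -/
def LexLE (a b : ℕ → ℕ) : Prop := LexLT a b ∨ a = b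

/-- Strict lexicographic order on finite words of length `n`
(given as functions on the first `n` indices). -/
def WordLT (n : ℕ) (a b : ℕ → ℕ) : Prop := ∃ i < n, (∀ j < i, a j = b j) ∧ a i < b i

namespace GreedyAux

noncomputable def psum (q : ℝ) (c : ℕ → ℕ) (n : ℕ) : ℝ :=
  ∑ i ∈ Finset.range n, (c i : ℝ) / q ^ (i + 1)

lemma psum_zero (q : ℝ) (c : ℕ → ℕ) : psum q c 0 = 0 := by simp [psum]

lemma psum_succ (q : ℝ) (c : ℕ → ℕ) (n : ℕ) :
    psum q c (n + 1) = psum q c n + (c n : ℝ) / q ^ (n + 1) :=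
  Finset.sum_range_succ _ _

lemma isGreedy_iff {q : ℝ} (hq : 1 < q) (c : ℕ → ℕ) :
    IsGreedy q c ↔ ∀ n, psum q c (n + 1) ≤ 1 ∧ 1 < psum q c (n + 1) + 1 / q ^ (n + 1) := by
  have hq0 : (0 : ℝ) < q := lt_trans one_pos hq
  constructor
  · intro h n
    obtain ⟨hmem, hub⟩ := h n
    refine ⟨by rw [psum_succ]; exact hmem, ?_⟩
    by_contra hle
    push_neg at hle
    rw [psum_succ] at hle
    have h1 : c n + 1 ≤ c n := hub (by
      show psum q c n + ((c n + 1 : ℕ) : ℝ) / q ^ (n + 1) ≤ 1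
      push_cast
      rw [add_div]
      linarith)
    omega
  · intro h n
    obtain ⟨h1, h2⟩ := h n
    constructor
    · show psum q c n + (c n : ℝ) / q ^ (n + 1) ≤ 1
      rw [← psum_succ]; exact h1
    · intro k hk
      by_contra hlt
      push_neg at hlt
      have hk1 : (c n : ℝ) + 1 ≤ (k : ℝ) := by exact_mod_cast hlt
      have hkk : psum q c n + ((c n : ℝ) + 1) / q ^ (n + 1) ≤ psum q c n + (k : ℝ) / q ^ (n + 1) := by
        gcongr
      have hset : psum q c n + (k : ℝ) / q ^ (n + 1) ≤ 1 := hk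
      rw [add_div] at hkk
      rw [psum_succ] at h2
      linarith

lemma isQuasiGreedy_iff {q : ℝ} (hq : 1 < q) (c : ℕ → ℕ) :
    IsQuasiGreedy q c ↔ ∀ n, psum q c (n + 1) < 1 ∧ 1 ≤ psum q c (n + 1) + 1 / q ^ (n + 1) := by
  have hq0 : (0 : ℝ) < q := lt_trans one_pos hq
  constructor
  · intro h n
    obtain ⟨hmem, hub⟩ := h n
    refine ⟨by rw [psum_succ]; exact hmem, ?_⟩
    by_contra hle
    push_neg at hle
    rw [psum_succ] at hle
    have h1 : c n + 1 ≤ c n := hub (by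
      show psum q c n + ((c n + 1 : ℕ) : ℝ) / q ^ (n + 1) < 1
      push_cast
      rw [add_div]
      linarith)
    omega
  · intro h n
    obtain ⟨h1, h2⟩ := h n
    constructor
    · show psum q c n + (c n : ℝ) / q ^ (n + 1) < 1
      rw [← psum_succ]; exact h1
    · intro k hk
      by_contra hlt
      push_neg at hlt
      have hk1 : (c n : ℝ) + 1 ≤ (k : ℝ) := by exact_mod_cast hlt
      have hkk : psum q c n + ((c n : ℝ) + 1) / q ^ (n + 1) ≤ psum q c n + (k : ℝ) / q ^ (n + 1) := by
        gcongr
      have hset : psum q c n + (k : ℝ) / q ^ (n + 1) < 1 := hk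
      rw [add_div] at hkk
      rw [psum_succ] at h2
      linarith

lemma greedy_unique {q : ℝ} {c d : ℕ → ℕ} (hc : IsGreedy q c) (hd : IsGreedy q d) : c = d := by
  funext n
  induction n using Nat.strong_induction_on with
  | _ n ih =>
    have hs : (∑ i ∈ Finset.range n, (d i : ℝ) / q ^ (i + 1))
        = ∑ i ∈ Finset.range n, (c i : ℝ) / q ^ (i + 1) :=
      Finset.sum_congr rfl fun i hi => by rw [ih i (Finset.mem_range.mp hi)]
    have hd' := hd n
    rw [hs] at hd'
    exact (hc n).unique hd'

lemma quasiGreedy_unique {q : ℝ} {c d : ℕ → ℕ} (hc : IsQuasiGreedy q c) (hd : IsQuasiGreedy q d) :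
    c = d := by
  funext n
  induction n using Nat.strong_induction_on with
  | _ n ih =>
    have hs : (∑ i ∈ Finset.range n, (d i : ℝ) / q ^ (i + 1))
        = ∑ i ∈ Finset.range n, (c i : ℝ) / q ^ (i + 1) :=
      Finset.sum_congr rfl fun i hi => by rw [ih i (Finset.mem_range.mp hi)]
    have hd' := hd n
    rw [hs] at hd'
    exact (hc n).unique hd'

lemma psum_add_period {q : ℝ} (hq0 : 0 < q) {c : ℕ → ℕ} {p : ℕ}
    (hp : ∀ i, c (i + p) = c i) (n : ℕ) :
    psum q c (p + n) = psum q c p + (1 / q ^ p) * psum q c n := by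
  rw [psum, Finset.sum_range_add]
  congr 1
  rw [psum, Finset.mul_sum]
  refine Finset.sum_congr rfl fun i hi => ?_
  rw [show p + i = i + p from Nat.add_comm _ _, hp i, show i + p + 1 = p + (i + 1) by ring,
    pow_add]
  have h1 : q ^ p ≠ 0 := (pow_pos hq0 p).ne'
  have h2 : q ^ (i + 1) ≠ 0 := (pow_pos hq0 (i + 1)).ne'
  field_simp

lemma inv_pow_anti {q : ℝ} (hq : 1 < q) {n m : ℕ} (h : n ≤ m) : 1 / q ^ m ≤ 1 / q ^ n :=
  one_div_le_one_div_of_le (pow_pos (lt_trans one_pos hq) n) (pow_le_pow_right₀ hq.le h)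

lemma exists_inv_pow_lt {q : ℝ} (hq : 1 < q) {ε : ℝ} (hε : 0 < ε) : ∃ n, 1 / q ^ n < ε := by
  have hq0 : (0 : ℝ) < q := lt_trans one_pos hq
  obtain ⟨n, hn⟩ := exists_pow_lt_of_lt_one hε (by rw [div_lt_one hq0]; exact hq : 1 / q < 1)
  exact ⟨n, by rwa [div_pow, one_pow] at hn⟩

end GreedyAux


open GreedyAux

/-- For `q > 1`, the greedy `q`-expansion is finite iff the quasi-greedy
`q`-expansion is periodic. -/
theorem greedy_finite_iff_quasiGreedy_periodic (q : ℝ) (hq : 1 < q)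
    (γ α : ℕ → ℕ) (hγ : IsGreedy q γ) (hα : IsQuasiGreedy q α) :
    (∃ N : ℕ, ∀ n ≥ N, γ n = 0) ↔ (∃ k : ℕ, 1 ≤ k ∧ ∀ i, α (i + k) = α i) := by
  classical
  have hq0 : (0 : ℝ) < q := lt_trans one_pos hq
  have hG := (isGreedy_iff hq γ).mp hγ
  have hQ := (isQuasiGreedy_iff hq α).mp hα
  constructor
  · rintro ⟨N, hN⟩
    have hconst : ∀ n, N ≤ n → psum q γ n = psum q γ N := by
      intro n hn
      induction n, hn using Nat.le_induction with
      | base => rfl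
      | succ n hn ih => rw [psum_succ, hN n hn, ih]; simp
    have hsle : psum q γ N ≤ 1 := by
      cases N with
      | zero => rw [psum_zero]; norm_num
      | succ n => exact (hG n).1
    have hs1 : psum q γ N = 1 := by
      by_contra hne
      have hslt : psum q γ N < 1 := lt_of_le_of_ne hsle hne
      obtain ⟨j, hj⟩ := exists_inv_pow_lt hq (show (0:ℝ) < 1 - psum q γ N by linarith)
      have h2 := (hG (max N j)).2
      rw [show max N j + 1 = (max N j) + 1 from rfl] at h2
      rw [hconst (max N j + 1) (by omega)] at h2
      have h3 := inv_pow_anti hq (show j ≤ max N j + 1 by omega)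
      linarith
    have hex : ∃ m, psum q γ m = 1 := ⟨N, hs1⟩
    obtain ⟨m, hm, hmin⟩ : ∃ m, psum q γ m = 1 ∧ ∀ n < m, psum q γ n ≠ 1 :=
      ⟨Nat.find hex, Nat.find_spec hex, fun n hn => Nat.find_min hex hn⟩
    rcases m with _ | m'
    · rw [psum_zero] at hm; norm_num at hm
    have hlt : ∀ r, r < m' + 1 → psum q γ r < 1 := by
      intro r hr
      rcases r with _ | s
      · rw [psum_zero]; norm_num
      · exact lt_of_le_of_ne (hG s).1 (hmin _ hr)
    have htail : ∀ r, 1 - psum q γ r ≤ 1 / q ^ r := by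
      intro r
      rcases r with _ | s
      · rw [psum_zero]; norm_num
      · linarith [(hG s).2]
    have hγm' : 1 ≤ γ m' := by
      rcases Nat.eq_zero_or_pos (γ m') with h0 | h1
      · exfalso
        rw [psum_succ, h0] at hm
        simp at hm
        exact absurd hm (ne_of_lt (hlt m' (by omega)))
      · exact h1
    set a : ℕ → ℕ := fun i => if i % (m' + 1) = m' then γ m' - 1 else γ (i % (m' + 1)) with ha
    have haper : ∀ i, a (i + (m' + 1)) = a i := by
      intro i; simp only [ha, Nat.add_mod_right]
    have haeq : ∀ r, r ≤ m' → psum q a r = psum q γ r := by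
      intro r hr
      simp only [psum]
      refine Finset.sum_congr rfl fun i hi => ?_
      have hi' : i < r := Finset.mem_range.mp hi
      have h1 : i % (m' + 1) = i := Nat.mod_eq_of_lt (by omega)
      have h2 : ¬ (i % (m' + 1) = m') := by omega
      simp only [ha, h2, if_false, h1]
      rw [if_neg (show ¬ i = m' by omega)]
    have ham : psum q a (m' + 1) = 1 - 1 / q ^ (m' + 1) := by
      rw [psum_succ, haeq m' le_rfl]
      have h1 : a m' = γ m' - 1 := by
        simp only [ha, Nat.mod_eq_of_lt (show m' < m' + 1 by omega), if_true]
      rw [h1, Nat.cast_sub hγm']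
      rw [psum_succ] at hm
      push_cast
      rw [sub_div]
      linarith
    have key : ∀ n, 0 < 1 - psum q a n ∧ 1 - psum q a n ≤ 1 / q ^ n := by
      intro n
      induction n using Nat.strong_induction_on with
      | _ n ih =>
        rcases Nat.lt_or_ge n (m' + 1) with hn | hn
        · rw [haeq n (by omega)]
          exact ⟨by linarith [hlt n hn], htail n⟩
        · obtain ⟨n', rfl⟩ : ∃ n', n = (m' + 1) + n' := ⟨n - (m' + 1), by omega⟩
          rw [psum_add_period hq0 haper n', ham]
          obtain ⟨ih1, ih2⟩ := ih n' (by omega)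
          have hpos : (0 : ℝ) < 1 / q ^ (m' + 1) := by positivity
          constructor
          · nlinarith [mul_pos hpos ih1]
          · have hp : (1 / q ^ (m' + 1)) * (1 - psum q a n') ≤ (1 / q ^ (m' + 1)) * (1 / q ^ n') :=
              mul_le_mul_of_nonneg_left ih2 (le_of_lt hpos)
            have heq : (1 / q ^ (m' + 1)) * (1 / q ^ n') = 1 / q ^ ((m' + 1) + n') := by
              rw [one_div_mul_one_div, ← pow_add]
            nlinarith
    have haq : IsQuasiGreedy q a :=
      (isQuasiGreedy_iff hq a).mpr fun n =>
        ⟨by linarith [(key (n + 1)).1], by linarith [(key (n + 1)).2]⟩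
    have hαa : α = a := quasiGreedy_unique hα haq
    exact ⟨m' + 1, by omega, fun i => by rw [hαa]; exact haper i⟩
  · rintro ⟨k, hk1, hper⟩
    have hQ1 : ∀ n, 1 ≤ n → psum q α n < 1 := by
      intro n hn
      obtain ⟨n', rfl⟩ : ∃ n', n = n' + 1 := ⟨n - 1, by omega⟩
      exact (hQ n').1
    have hQ2 : ∀ n, 1 - psum q α n ≤ 1 / q ^ n := by
      intro n
      rcases n with _ | s
      · rw [psum_zero]; norm_num
      · linarith [(hQ s).2]
    have hstep : ∀ n, 1 - psum q α (k + n)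
        = (1 - psum q α k - 1 / q ^ k) + (1 / q ^ k) * (1 - psum q α n) := by
      intro n; rw [psum_add_period hq0 hper n]; ring
    have he0 : 1 - psum q α k - 1 / q ^ k ≤ 0 := by linarith [hQ2 k]
    have hek : 1 - psum q α k - 1 / q ^ k = 0 := by
      by_contra hne
      have helt : 1 - psum q α k - 1 / q ^ k < 0 := lt_of_le_of_ne he0 hne
      obtain ⟨j, hj⟩ := exists_inv_pow_lt hq (show (0:ℝ) < -(1 - psum q α k - 1 / q ^ k) by linarith)
      have h1 : 0 < 1 - psum q α ((j + 1) * k) := by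
        have := hQ1 ((j + 1) * k) (Nat.one_le_iff_ne_zero.mpr (by positivity))
        linarith
      have h2 : 1 - psum q α ((j + 1) * k)
          ≤ (1 - psum q α k - 1 / q ^ k) + 1 / q ^ ((j + 1) * k) := by
        have heq : (j + 1) * k = k + j * k := by ring
        rw [heq, hstep (j * k)]
        have hm1 : (1 / q ^ k) * (1 - psum q α (j * k)) ≤ (1 / q ^ k) * (1 / q ^ (j * k)) :=
          mul_le_mul_of_nonneg_left (hQ2 (j * k)) (by positivity)
        have hm2 : (1 / q ^ k) * (1 / q ^ (j * k)) = 1 / q ^ (k + j * k) := by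
          rw [pow_add, one_div_mul_one_div]
        linarith
      have h3 : 1 / q ^ ((j + 1) * k) ≤ 1 / q ^ j :=
        inv_pow_anti hq (by calc j ≤ j + 1 := by omega
                              _ ≤ (j + 1) * k := Nat.le_mul_of_pos_right _ (by omega))
      linarith
    have hex : ∃ n, psum q α (n + 1) + 1 / q ^ (n + 1) = 1 := by
      obtain ⟨k', rfl⟩ : ∃ k', k = k' + 1 := ⟨k - 1, by omega⟩
      exact ⟨k', by linarith⟩
    set n₀ := Nat.find hex with hn₀def
    have hn₀ : psum q α (n₀ + 1) + 1 / q ^ (n₀ + 1) = 1 := Nat.find_spec hex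
    have hn₀min : ∀ n < n₀, psum q α (n + 1) + 1 / q ^ (n + 1) ≠ 1 :=
      fun n hn => Nat.find_min hex hn
    set g : ℕ → ℕ := fun i => if i < n₀ then α i else if i = n₀ then α n₀ + 1 else 0 with hg
    have hgeq : ∀ r, r ≤ n₀ → psum q g r = psum q α r := by
      intro r hr
      simp only [psum]
      refine Finset.sum_congr rfl fun i hi => ?_
      have hi' : i < r := Finset.mem_range.mp hi
      have : i < n₀ := by omega
      simp only [hg, this, if_true]
    have hg1 : ∀ n, n₀ + 1 ≤ n → psum q g n = 1 := by
      intro n hn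
      induction n, hn using Nat.le_induction with
      | base =>
        rw [psum_succ, hgeq n₀ le_rfl]
        have h1 : g n₀ = α n₀ + 1 := by simp [hg]
        rw [h1]
        push_cast
        rw [add_div]
        have h2 := hn₀
        rw [psum_succ] at h2
        linarith
      | succ n hn ih =>
        rw [psum_succ]
        have h1 : g n = 0 := by
          simp only [hg, show ¬ n < n₀ by omega, if_false, show ¬ n = n₀ by omega]
        rw [h1, ih]
        simp
    have hgg : IsGreedy q g := by
      refine (isGreedy_iff hq g).mpr fun n => ?_
      rcases Nat.lt_or_ge (n + 1) (n₀ + 1) with hn | hn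
      · rw [hgeq (n + 1) (by omega)]
        refine ⟨le_of_lt (hQ1 (n + 1) (by omega)), ?_⟩
        have hge := hQ2 (n + 1)
        have hne := hn₀min n (by omega)
        exact lt_of_le_of_ne (by linarith) (Ne.symm hne)
      · rw [hg1 (n + 1) hn]
        have : (0 : ℝ) < 1 / q ^ (n + 1) := by positivity
        exact ⟨le_refl 1, by linarith⟩
    have hγg : γ = g := greedy_unique hγ hgg
    refine ⟨n₀ + 1, fun n hn => ?_⟩
    rw [hγg]
    simp only [hg, show ¬ n < n₀ by omega, if_false, show ¬ n = n₀ by omega]
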